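/- Let n and k be positive integers and let a, b be integers with 0 ≤ a ≤ n and 0 ≤ b ≤ n. If there exists an orientation of the n-cube in which every vertex has in-degree a or b, then there exists an orientation of the (k·n)-cube in which every vertex has in-degree k·a or k·b. -/

import Mathlib

/-- Flip coordinate `i` of a binary `n`-tuple. -/
def flipBit {n : ℕ} (v : Fin n → ZMod 2) (i : Fin n) : Fin n → ZMod 2 :=
  Function.update v i (v i + 1)

/-- An orientation of the `n`-cube: to each edge (a pair of vertices differing in
exactly one coordinate) we assign a head, one of its two endpoints.  The edge at
vertex `v` in direction `i` joins `v` and `flipBit v i`; `head v i` is the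
assigned head of that edge, which must be one of the endpoints and must not
depend on from which endpoint the edge is viewed. -/
structure CubeOrientation (n : ℕ) where
  head : (Fin n → ZMod 2) → Fin n → (Fin n → ZMod 2)
  head_mem : ∀ v i, head v i = v ∨ head v i = flipBit v i
  compatible : ∀ v i, head (flipBit v i) i = head v i

/-- The in-degree of a vertex `v`: the number of edges incident to `v`
whose head is `v`. -/
def CubeOrientation.inDeg {n : ℕ} (o : CubeOrientation n) (v : Fin n → ZMod 2) : ℕ :=
  (Finset.univ.filter fun i : Fin n => o.head v i = v).card

lemma flipBit_flipBit {n : ℕ} (v : Fin n → ZMod 2) (i : Fin n) :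
    flipBit (flipBit v i) i = v := by
  funext j
  unfold flipBit
  by_cases h : j = i
  · subst h
    simp only [Function.update_self]
    have h2 : (1 : ZMod 2) + 1 = 0 := rfl
    rw [add_assoc, h2, add_zero]
  · simp [Function.update_of_ne h]

lemma flipBit_ne {n : ℕ} (v : Fin n → ZMod 2) (i : Fin n) :
    flipBit v i ≠ v := by
  intro h
  have := congrFun h i
  simp only [flipBit, Function.update_self] at this
  have : (1 : ZMod 2) = 0 := by
    have := add_eq_left.mp this
    exact this
  exact one_ne_zero this

/-- block-sum map -/
def blockSum {n k : ℕ} (v : Fin (k * n) → ZMod 2) (i : Fin n) : ZMod 2 :=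
  ∑ c ∈ Finset.univ.filter
      (fun c : Fin (k * n) => ((finProdFinEquiv (m := k) (n := n)).symm c).2 = i), v c

lemma blockSum_flipBit {n k : ℕ} (v : Fin (k * n) → ZMod 2) (c : Fin (k * n)) :
    blockSum (flipBit v c) = flipBit (blockSum v) ((finProdFinEquiv.symm c).2) := by
  funext i
  unfold blockSum flipBit
  by_cases h : (finProdFinEquiv.symm c).2 = i
  · subst h
    rw [Function.update_self]
    beta_reduce
    have hcmem : c ∈ Finset.univ.filter
        (fun x : Fin (k * n) => ((finProdFinEquiv (m := k) (n := n)).symm x).2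
          = (finProdFinEquiv.symm c).2) := by simp
    rw [← Finset.sum_erase_add _ _ hcmem, ← Finset.sum_erase_add _ v hcmem,
        Function.update_self,
        Finset.sum_congr rfl fun x hx => Function.update_of_ne (Finset.ne_of_mem_erase hx) _ v]
    ring
  · rw [Function.update_of_ne (Ne.symm h)]
    apply Finset.sum_congr rfl
    intro x hx
    simp only [Finset.mem_filter] at hx
    have hxc : x ≠ c := by
      intro he; subst he; exact h hx.2
    rw [Function.update_of_ne hxc]

lemma fiber_card {n k : ℕ} (i : Fin n) :
    (Finset.univ.filter
      (fun c : Fin (k * n) => ((finProdFinEquiv (m := k) (n := n)).symm c).2 = i)).card = k := by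
  have hinj : Function.Injective (fun j : Fin k => finProdFinEquiv (j, i)) := by
    intro x y hxy
    have h2 := finProdFinEquiv.injective hxy
    exact (Prod.ext_iff.mp h2).1
  have : (Finset.univ.filter
      (fun c : Fin (k * n) => ((finProdFinEquiv (m := k) (n := n)).symm c).2 = i))
      = Finset.univ.image (fun j : Fin k => finProdFinEquiv (j, i)) := by
    ext c
    simp only [Finset.mem_filter, Finset.mem_univ, true_and, Finset.mem_image]
    constructor
    · intro hc
      refine ⟨(finProdFinEquiv.symm c).1, ?_⟩
      rw [show ((finProdFinEquiv.symm c).1, i) = finProdFinEquiv.symm c by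
        rw [← hc]]
      exact finProdFinEquiv.apply_symm_apply c
    · rintro ⟨j, rfl⟩
      simp
  rw [this, Finset.card_image_of_injective _ hinj, Finset.card_univ, Fintype.card_fin]

theorem hypercube_two_indegrees_scale (n k : ℕ) (hn : 0 < n) (hk : 0 < k) (a b : ℤ)
    (ha0 : 0 ≤ a) (han : a ≤ n) (hb0 : 0 ≤ b) (hbn : b ≤ n)
    (h : ∃ o : CubeOrientation n, ∀ v, (o.inDeg v : ℤ) = a ∨ (o.inDeg v : ℤ) = b) :
    ∃ o : CubeOrientation (k * n), ∀ v,
      (o.inDeg v : ℤ) = k * a ∨ (o.inDeg v : ℤ) = k * b := by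
  obtain ⟨o, ho⟩ := h
  set r : Fin (k * n) → Fin n := fun c => ((finProdFinEquiv (m := k) (n := n)).symm c).2 with hr
  refine ⟨⟨fun v c => if o.head (blockSum v) (r c) = blockSum v then v else flipBit v c,
    ?_, ?_⟩, ?_⟩
  · intro v c
    by_cases hc : o.head (blockSum v) (r c) = blockSum v
    · left; simp [hc]
    · right; simp [hc]
  · intro v c
    have hs : blockSum (flipBit v c) = flipBit (blockSum v) (r c) := blockSum_flipBit v c
    have hcompat : o.head (blockSum (flipBit v c)) (r c) = o.head (blockSum v) (r c) := by
      rw [hs]; exact o.compatible (blockSum v) (r c)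
    show (if o.head (blockSum (flipBit v c)) (r c) = blockSum (flipBit v c)
        then flipBit v c else flipBit (flipBit v c) c)
      = (if o.head (blockSum v) (r c) = blockSum v then v else flipBit v c)
    by_cases hc : o.head (blockSum v) (r c) = blockSum v
    · have : ¬ (o.head (blockSum (flipBit v c)) (r c) = blockSum (flipBit v c)) := by
        rw [hcompat, hc, hs]
        exact fun he => flipBit_ne (blockSum v) (r c) he.symm
      rw [if_neg this, if_pos hc]
      exact flipBit_flipBit v c
    · have hmem := o.head_mem (blockSum v) (r c)
      have hc2 : o.head (blockSum v) (r c) = flipBit (blockSum v) (r c) := hmem.resolve_left hc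
      have : o.head (blockSum (flipBit v c)) (r c) = blockSum (flipBit v c) := by
        rw [hcompat, hc2, hs]
      rw [if_pos this, if_neg hc]
  · intro v
    have key : (Finset.univ.filter fun c : Fin (k * n) =>
        (if o.head (blockSum v) (r c) = blockSum v then v else flipBit v c) = v).card
        = k * o.inDeg (blockSum v) := by
      have hset : (Finset.univ.filter fun c : Fin (k * n) =>
          (if o.head (blockSum v) (r c) = blockSum v then v else flipBit v c) = v)
          = Finset.univ.filter fun c => o.head (blockSum v) (r c) = blockSum v := by
        ext c
        simp only [Finset.mem_filter, Finset.mem_univ, true_and]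
        by_cases hc : o.head (blockSum v) (r c) = blockSum v
        · simp [hc]
        · simp [hc, flipBit_ne v c]
      rw [hset]
      rw [Finset.card_eq_sum_card_fiberwise
        (f := r) (t := Finset.univ.filter fun i => o.head (blockSum v) i = blockSum v)
        (by intro x hx; simp only [Finset.coe_filter, Set.mem_setOf_eq, Finset.mem_filter, Finset.mem_univ, true_and] at hx ⊢
            exact hx)]
      have : ∀ i ∈ Finset.univ.filter fun i => o.head (blockSum v) i = blockSum v,
          ((Finset.univ.filter fun c => o.head (blockSum v) (r c) = blockSum v).filter
            fun c => r c = i).card = k := by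
        intro i hi
        simp only [Finset.mem_filter, Finset.mem_univ, true_and] at hi
        have : ((Finset.univ.filter fun c => o.head (blockSum v) (r c) = blockSum v).filter
            fun c => r c = i) = Finset.univ.filter fun c : Fin (k * n) => r c = i := by
          ext c
          simp only [Finset.mem_filter, Finset.mem_univ, true_and]
          constructor
          · rintro ⟨_, hc⟩; exact hc
          · intro hc; exact ⟨hc ▸ hi, hc⟩
        rw [this]
        exact fiber_card i
      rw [Finset.sum_congr rfl this, Finset.sum_const, smul_eq_mul, mul_comm,
        CubeOrientation.inDeg]
    unfold CubeOrientation.inDeg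
    simp only
    rw [key]
    rcases ho (blockSum v) with h1 | h1
    · left; push_cast; rw [h1]
    · right; push_cast; rw [h1]
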